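/- arXiv:1610.06248 — 2 statements merged into one kernel-verified Lean document; each statement's English description precedes it below -/
import Mathlib

section
/- Let μ be a probability measure on ℂ with compact support, and suppose X_1, …, X_n are independent and identically distributed random variables with distribution μ. Then for every ε > 0 there exist constants C, c > 0 (depending only on μ and ε) such that, with probability at least 1 − C e^{−cn}, the polynomial p_n(z) := ∏_{j=1}^n (z − X_j) has no critical points (roots of p_n') outside the set N_μ(ε). -/
open MeasureTheory ProbabilityTheory Filter Polynomial

noncomputable section

/-- The support of a measure on ℂ: points all of whose neighborhoods have positive measure. -/
def measSupp (μ : Measure ℂ) : Set ℂ := {x | ∀ U ∈ nhds x, μ U ≠ 0}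

/-- The Cauchy–Stieltjes transform m_μ(z) = ∫ dμ(x)/(z − x). -/
def stieltjes (μ : Measure ℂ) (z : ℂ) : ℂ := ∫ x, (z - x)⁻¹ ∂μ

/-- M_μ : the zero set of the Cauchy–Stieltjes transform outside the support of μ. -/
def Mset (μ : Measure ℂ) : Set ℂ := {z | z ∉ measSupp μ ∧ stieltjes μ z = 0}

/-- N_μ(ε) : the ε-neighborhood of supp(μ) ∪ M_μ. -/
def Nset (μ : Measure ℂ) (ε : ℝ) : Set ℂ :=
  {z | Metric.infDist z (measSupp μ ∪ Mset μ) < ε}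

namespace NoOutliersAux

open Metric Real

lemma measSupp_closed (μ : Measure ℂ) : IsClosed (measSupp μ) := by
  rw [← isOpen_compl_iff, isOpen_iff_forall_mem_open]
  intro x hx
  simp only [measSupp, Set.mem_compl_iff, Set.mem_setOf_eq, not_forall] at hx
  obtain ⟨U, hU, hU0⟩ := hx
  push_neg at hU0
  obtain ⟨V, hVU, hVo, hxV⟩ := _root_.mem_nhds_iff.mp hU
  refine ⟨V, fun y hy => ?_, hVo, hxV⟩
  simp only [measSupp, Set.mem_compl_iff, Set.mem_setOf_eq, not_forall]
  exact ⟨V, hVo.mem_nhds hy, by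
    push_neg
    exact le_antisymm ((measure_mono hVU).trans hU0.le) zero_le⟩

lemma measSupp_null (μ : Measure ℂ) : μ (measSupp μ)ᶜ = 0 := by
  obtain ⟨b, hbc, -, hb⟩ := TopologicalSpace.exists_countable_basis ℂ
  set S0 : Set (Set ℂ) := {B ∈ b | μ B = 0}
  have hsub : (measSupp μ)ᶜ ⊆ ⋃₀ S0 := by
    intro x hx
    simp only [measSupp, Set.mem_compl_iff, Set.mem_setOf_eq, not_forall] at hx
    obtain ⟨U, hU, hU0⟩ := hx
    push_neg at hU0
    obtain ⟨V, hVU, hVo, hxV⟩ := _root_.mem_nhds_iff.mp hU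
    obtain ⟨B, hBb, hxB, hBV⟩ := hb.exists_subset_of_mem_open hxV hVo
    exact ⟨B, ⟨hBb, le_antisymm ((measure_mono (hBV.trans hVU)).trans hU0.le) zero_le⟩, hxB⟩
  refine measure_mono_null hsub ?_
  rw [measure_sUnion_null_iff (hbc.mono (Set.sep_subset _ _))]
  exact fun s hs => hs.2

lemma eval_deriv_prod (s : Finset ℕ) (f : ℕ → ℂ) (z : ℂ) (hz : ∀ j ∈ s, z ≠ f j) :
    eval z (derivative (∏ j ∈ s, (X - C (f j)))) =
      (∏ j ∈ s, (z - f j)) * ∑ j ∈ s, (z - f j)⁻¹ := by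
  classical
  induction s using Finset.induction_on with
  | empty => simp
  | insert a s' hnotmem ih =>
    have ha : z - f a ≠ 0 := sub_ne_zero.mpr (hz a (Finset.mem_insert_self a s'))
    rw [Finset.prod_insert hnotmem, derivative_mul, eval_add, eval_mul, eval_mul,
      Finset.prod_insert hnotmem, Finset.sum_insert hnotmem,
      ih (fun j hj => hz j (Finset.mem_insert_of_mem hj))]
    simp only [derivative_sub, derivative_X, derivative_C, sub_zero, eval_one, eval_sub,
      eval_X, eval_C, eval_prod]
    field_simp

lemma inv_diff_bound (z z' x : ℂ) (ε : ℝ) (hε : 0 < ε) (h1 : ε ≤ ‖z - x‖) (h2 : ε ≤ ‖z' - x‖) :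
    ‖(z - x)⁻¹ - (z' - x)⁻¹‖ ≤ ‖z - z'‖ / ε^2 := by
  have ha : z - x ≠ 0 := by intro h; rw [h] at h1; simp at h1; linarith
  have hb : z' - x ≠ 0 := by intro h; rw [h] at h2; simp at h2; linarith
  rw [inv_sub_inv ha hb]
  have h3 : z' - x - (z - x) = -(z - z') := by ring
  have hz1 : (0:ℝ) < ‖z - x‖ := lt_of_lt_of_le hε h1
  have hz2 : (0:ℝ) < ‖z' - x‖ := lt_of_lt_of_le hε h2
  rw [h3, norm_div, norm_neg, norm_mul]
  rw [div_le_div_iff₀ (mul_pos hz1 hz2) (by positivity)]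
  calc ‖z - z'‖ * ε^2 = ‖z - z'‖ * (ε * ε) := by ring
  _ ≤ ‖z - z'‖ * (‖z - x‖ * ‖z' - x‖) :=
      mul_le_mul_of_nonneg_left (mul_le_mul h1 h2 hε.le (by linarith)) (norm_nonneg _)

lemma halfplane (s : Finset ℕ) (hs : s.Nonempty) (f : ℕ → ℂ) (R : ℝ) (hR : 0 ≤ R)
    (hf : ∀ j ∈ s, ‖f j‖ ≤ R) (z : ℂ) (hz : R < ‖z‖) :
    ∑ j ∈ s, (z - f j)⁻¹ ≠ 0 := by
  intro h0
  have hpos : 0 < (z * ∑ j ∈ s, (z - f j)⁻¹).re := by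
    rw [Finset.mul_sum, Complex.re_sum]
    refine Finset.sum_pos (fun j hj => ?_) hs
    set u := z - f j with hu
    have hune : u ≠ 0 := by
      intro h
      have : z = f j := by rw [sub_eq_zero] at h; exact h
      rw [this] at hz; exact absurd (hf j hj) (not_le.mpr hz)
    have hrw : z * u⁻¹ = (((Complex.normSq u)⁻¹ : ℝ) : ℂ) * (z * (starRingEnd ℂ) u) := by
      rw [Complex.inv_def]; ring
    rw [hrw, Complex.re_ofReal_mul]
    have h1 : 0 < (Complex.normSq u)⁻¹ := inv_pos.mpr (Complex.normSq_pos.mpr hune)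
    refine mul_pos h1 ?_
    have hexp : z * (starRingEnd ℂ) u = z * (starRingEnd ℂ) z - z * (starRingEnd ℂ) (f j) := by
      rw [hu, map_sub]; ring
    rw [hexp, Complex.sub_re, Complex.mul_conj]
    have h2 : (z * (starRingEnd ℂ) (f j)).re ≤ ‖z‖ * ‖f j‖ := by
      calc (z * (starRingEnd ℂ) (f j)).re ≤ ‖z * (starRingEnd ℂ) (f j)‖ :=
            Complex.re_le_norm _
      _ = ‖z‖ * ‖f j‖ := by rw [norm_mul, Complex.norm_conj]
    have h3 : ‖z‖ * ‖f j‖ ≤ ‖z‖ * R := mul_le_mul_of_nonneg_left (hf j hj) (norm_nonneg z)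
    have h4 : Complex.normSq z = ‖z‖^2 := by rw [Complex.normSq_eq_norm_sq]
    have h5 : (↑(Complex.normSq z) : ℂ).re = Complex.normSq z := Complex.ofReal_re _
    rw [h5, h4]
    nlinarith [norm_nonneg z]
  rw [h0, mul_zero, Complex.zero_re] at hpos
  exact lt_irrefl 0 hpos

lemma chernoff {Ω : Type*} [MeasurableSpace Ω] (P : Measure Ω) [IsProbabilityMeasure P]
    (μ : Measure ℂ) [IsProbabilityMeasure μ] (X : ℕ → Ω → ℂ) (hmeas : ∀ j, Measurable (X j))
    (hdist : ∀ j, Measure.map (X j) P = μ)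
    (hindep : iIndepFun X P)
    (S : Set ℂ) (hSm : MeasurableSet S) (hS0 : μ Sᶜ = 0)
    (g : ℂ → ℝ) (hg : Measurable g) (M : ℝ)
    (hb : ∀ x ∈ S, |g x| ≤ M) (hmean : ∫ x, g x ∂μ = 0)
    (a t : ℝ) (ht : 0 < t) (htM : t * M ≤ 1) (n : ℕ) :
    P {ω | a * n ≤ ∑ j ∈ Finset.range n, g (X j ω)} ≤
      ENNReal.ofReal (Real.exp ((t^2 * M^2 - t * a) * n)) := by
  classical
  set Z : ℕ → Ω → ℝ := fun j ω => g (X j ω) with hZ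
  have hZme : ∀ j, Measurable (Z j) := fun j => hg.comp (hmeas j)
  have hindepZ : iIndepFun Z P := hindep.comp (fun _ => g) (fun _ => hg)
  have haeS : ∀ j, ∀ᵐ ω ∂P, X j ω ∈ S := by
    intro j
    have : P (X j ⁻¹' Sᶜ) = 0 := by
      rw [← Measure.map_apply (hmeas j) hSm.compl, hdist j, hS0]
    filter_upwards [measure_eq_zero_iff_ae_notMem.mp this] with ω h using not_not.mp h
  have haeB : ∀ j, ∀ᵐ ω ∂P, |Z j ω| ≤ M := by
    intro j; filter_upwards [haeS j] with ω h using hb _ h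
  have hmuS : ∀ᵐ x ∂μ, x ∈ S := by
    filter_upwards [measure_eq_zero_iff_ae_notMem.mp hS0] with x h using not_not.mp h
  have hint : ∀ j, Integrable (fun ω => exp (t * Z j ω)) P := by
    intro j
    refine Integrable.mono' (integrable_const (exp (t * M))) ?_ ?_
    · exact ((measurable_const.mul (hZme j)).exp).aestronglyMeasurable
    · filter_upwards [haeB j] with ω h
      rw [Real.norm_eq_abs, abs_exp]
      exact exp_le_exp.mpr (mul_le_mul_of_nonneg_left (le_of_abs_le h) ht.le)
  have hIg : Integrable g μ := by
    refine Integrable.mono' (integrable_const M) hg.aestronglyMeasurable ?_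
    filter_upwards [hmuS] with x h using hb x h
  have hIexp : Integrable (fun x => exp (t * g x)) μ := by
    refine Integrable.mono' (integrable_const (exp (t * M))) ?_ ?_
    · exact ((measurable_const.mul hg).exp).aestronglyMeasurable
    · filter_upwards [hmuS] with x h
      rw [Real.norm_eq_abs, abs_exp]
      exact exp_le_exp.mpr (mul_le_mul_of_nonneg_left (le_of_abs_le (hb x h)) ht.le)
  have hmgf : ∀ j, mgf (Z j) P t = ∫ x, exp (t * g x) ∂μ := by
    intro j
    rw [mgf, ← hdist j, integral_map (hmeas j).aemeasurable]
    exact ((measurable_const.mul hg).exp).aestronglyMeasurable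
  have hmgf_le : (∫ x, exp (t * g x) ∂μ) ≤ exp (t^2 * M^2) := by
    have hptwise : ∀ᵐ x ∂μ, exp (t * g x) ≤ 1 + t * g x + t^2 * M^2 := by
      filter_upwards [hmuS] with x hx
      have h1 : |t * g x| ≤ 1 := by
        calc |t * g x| = t * |g x| := by rw [abs_mul, abs_of_pos ht]
        _ ≤ t * M := mul_le_mul_of_nonneg_left (hb x hx) ht.le
        _ ≤ 1 := htM
      have h2 := Real.exp_bound h1 (n := 3) (by norm_num)
      have h3 : ∑ m ∈ Finset.range 3, (t * g x) ^ m / (m.factorial : ℝ)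
          = 1 + t * g x + (t * g x)^2 / 2 := by
        simp [Finset.sum_range_succ]
      have h4 : |t * g x| ^ 3 * ((3+1 : ℕ) / ((3).factorial * 3) : ℝ) ≤ (t*g x)^2 * (2/9) := by
        have h5 : |t * g x| ^ 3 ≤ |t * g x| ^ 2 :=
          pow_le_pow_of_le_one (abs_nonneg _) h1 (by norm_num)
        calc |t * g x| ^ 3 * ((3+1 : ℕ) / ((3).factorial * 3) : ℝ)
            ≤ |t * g x| ^ 2 * (2/9) :=
              mul_le_mul h5 (by norm_num [Nat.factorial]) (by positivity) (by positivity)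
        _ = (t * g x)^2 * (2/9) := by rw [sq_abs]
      have h5 : (t * g x)^2 ≤ t^2 * M^2 := by
        rw [mul_pow]
        exact mul_le_mul_of_nonneg_left
          (sq_le_sq' (neg_le_of_abs_le (hb x hx)) (le_of_abs_le (hb x hx))) (by positivity)
      have h6 := (abs_le.mp ((h2.trans_eq (by norm_num)).trans h4)).2
      rw [h3] at h6
      nlinarith [sq_nonneg (t * g x)]
    have hR : Integrable (fun x => 1 + t * g x + t^2 * M^2) μ :=
      ((integrable_const 1).add (hIg.const_mul t)).add (integrable_const _)
    calc (∫ x, exp (t * g x) ∂μ) ≤ ∫ x, (1 + t * g x + t^2 * M^2) ∂μ :=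
          integral_mono_ae hIexp hR hptwise
    _ = 1 + t^2*M^2 := by
        have hfe : (fun x : ℂ => 1 + t * g x + t^2 * M^2) = fun x => t * g x + (1 + t^2*M^2) := by
          funext x; ring
        rw [hfe, integral_add (hIg.const_mul t) (integrable_const _), integral_const_mul,
          integral_const, hmean]
        simp
    _ ≤ exp (t^2 * M^2) := by
        have := Real.add_one_le_exp (t^2 * M^2); linarith
  set W : Ω → ℝ := fun ω => ∑ j ∈ Finset.range n, Z j ω with hW
  have hWs : W = ∑ j ∈ Finset.range n, Z j := by funext ω; simp [hW, Finset.sum_apply]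
  have hintW : Integrable (fun ω => exp (t * W ω)) P := by
    rw [hWs]
    exact hindepZ.integrable_exp_mul_sum hZme (fun i _ => hint i)
  have hmgfW : mgf W P t ≤ exp (t^2 * M^2) ^ n := by
    rw [hWs, hindepZ.mgf_sum hZme]
    calc ∏ j ∈ Finset.range n, mgf (Z j) P t = (∫ x, exp (t * g x) ∂μ) ^ n := by
          rw [Finset.prod_congr rfl (fun j _ => hmgf j), Finset.prod_const, Finset.card_range]
    _ ≤ exp (t^2 * M^2) ^ n := by
        refine pow_le_pow_left₀ ?_ hmgf_le n
        rw [← hmgf 0]; exact mgf_nonneg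
  have hcher := measure_ge_le_exp_mul_mgf (X := W) (μ := P) (a * n) ht.le hintW
  have hfin : (P {ω | a * ↑n ≤ W ω}).toReal ≤ exp ((t^2 * M^2 - t * a) * n) := by
    calc (P {ω | a * ↑n ≤ W ω}).toReal ≤ exp (-t * (a * n)) * mgf W P t := hcher
    _ ≤ exp (-t * (a * n)) * exp (t^2 * M^2) ^ n :=
        mul_le_mul_of_nonneg_left hmgfW (exp_nonneg _)
    _ = exp ((t^2 * M^2 - t * a) * n) := by
        rw [← Real.exp_nat_mul, ← Real.exp_add]; ring_nf
  have heq : P {ω | a * ↑n ≤ W ω} = ENNReal.ofReal ((P {ω | a * ↑n ≤ W ω}).toReal) :=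
    (ENNReal.ofReal_toReal (measure_ne_top _ _)).symm
  calc P {ω | a * ↑n ≤ ∑ j ∈ Finset.range n, g (X j ω)} = P {ω | a * ↑n ≤ W ω} := rfl
  _ ≤ ENNReal.ofReal (exp ((t^2 * M^2 - t * a) * n)) := by
      rw [heq]; exact ENNReal.ofReal_le_ofReal hfin

end NoOutliersAux

set_option maxHeartbeats 2000000 in
open NoOutliersAux Metric Real in
/-- **Theorem (no outliers in the unperturbed model).**
Let μ be a compactly supported probability measure on ℂ and X₁, …, Xₙ iid with
distribution μ.  For every ε > 0 there are constants C, c > 0 (depending only on μ and ε)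
so that with probability at least 1 − C e^{−cn} the polynomial pₙ(z) = ∏_{j=1}^n (z − X_j)
has no critical points outside N_μ(ε). -/
theorem no_outliers_unperturbed
    {Ω : Type*} [MeasurableSpace Ω] (P : Measure Ω) [IsProbabilityMeasure P]
    (μ : Measure ℂ) [IsProbabilityMeasure μ] (hsupp : IsCompact (measSupp μ))
    (X : ℕ → Ω → ℂ) (hmeas : ∀ j, Measurable (X j))
    (hdist : ∀ j, Measure.map (X j) P = μ)
    (hindep : iIndepFun X P)
    (ε : ℝ) (hε : 0 < ε) :
    ∃ C > (0 : ℝ), ∃ c > (0 : ℝ), ∀ n : ℕ,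
      P {ω | ∃ z ∈ ((∏ j ∈ Finset.range n,
            (Polynomial.X - Polynomial.C (X j ω))).derivative).roots,
          z ∉ Nset μ ε}
        ≤ ENNReal.ofReal (C * Real.exp (-(c * n))) := by
  classical
  have hSm : MeasurableSet (measSupp μ) := (measSupp_closed μ).measurableSet
  have hS0 : μ (measSupp μ)ᶜ = 0 := measSupp_null μ
  have hmuS : ∀ᵐ x ∂μ, x ∈ measSupp μ := by
    filter_upwards [measure_eq_zero_iff_ae_notMem.mp hS0] with x h using not_not.mp h
  obtain ⟨R0, hR0S⟩ := hsupp.isBounded.subset_closedBall 0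
  set R : ℝ := max R0 0 with hR
  have hR0 : 0 ≤ R := le_max_right _ _
  have hRS : measSupp μ ⊆ closedBall 0 R :=
    hR0S.trans (closedBall_subset_closedBall (le_max_left _ _))
  set K : Set ℂ := closedBall (0:ℂ) R ∩ {z | z ∉ Nset μ ε} with hKdef
  have hKdist : ∀ z ∈ K, ∀ x ∈ measSupp μ ∪ Mset μ, ε ≤ dist z x := by
    rintro z ⟨-, hzN⟩ x hx
    have h1 : ε ≤ infDist z (measSupp μ ∪ Mset μ) := not_lt.mp hzN
    exact h1.trans (infDist_le_dist_of_mem hx)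
  have hKnotin : ∀ z ∈ K, z ∉ measSupp μ ∪ Mset μ := by
    intro z hz hmem
    have := hKdist z hz z hmem
    rw [dist_self] at this; linarith
  have hKc : IsCompact K := by
    refine isCompact_closedBall _ _ |>.inter_right ?_
    have : {z : ℂ | z ∉ Nset μ ε} = (fun z => infDist z (measSupp μ ∪ Mset μ)) ⁻¹' (Set.Ici ε) := by
      ext z; simp [Nset, not_lt]
    rw [this]
    exact isClosed_Ici.preimage (continuous_infDist_pt _)
  -- integrability and bounds for the Stieltjes transform
  have hInt : ∀ w : ℂ, (∀ x ∈ measSupp μ, ε ≤ ‖w - x‖) →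
      Integrable (fun x => (w - x)⁻¹) μ := by
    intro w hw
    refine Integrable.mono' (integrable_const ε⁻¹)
      ((measurable_const.sub measurable_id).inv).aestronglyMeasurable ?_
    filter_upwards [hmuS] with x hx
    rw [norm_inv]
    exact inv_anti₀ hε (hw x hx)
  have hstb : ∀ w : ℂ, (∀ x ∈ measSupp μ, ε ≤ ‖w - x‖) → ‖stieltjes μ w‖ ≤ ε⁻¹ := by
    intro w hw
    refine (norm_integral_le_of_norm_le (integrable_const ε⁻¹) ?_)
      |>.trans (by simp)
    filter_upwards [hmuS] with x hx
    rw [norm_inv]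
    exact inv_anti₀ hε (hw x hx)
  -- the minimum δ of ‖stieltjes‖ on K
  obtain ⟨δ, hδ0, hδK⟩ : ∃ δ > (0:ℝ), ∀ z ∈ K, δ ≤ ‖stieltjes μ z‖ := by
    by_cases hne : K.Nonempty
    · have hKe : ∀ z ∈ K, ∀ x ∈ measSupp μ, ε ≤ ‖z - x‖ := by
        intro z hz x hx
        have := hKdist z hz x (Or.inl hx); rwa [dist_eq_norm] at this
      have hlip : ∀ z ∈ K, ∀ z' ∈ K, ‖stieltjes μ z - stieltjes μ z'‖ ≤ ‖z - z'‖ / ε^2 := by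
        intro z hz z' hz'
        rw [stieltjes, stieltjes, ← integral_sub (hInt z (hKe z hz)) (hInt z' (hKe z' hz'))]
        refine (norm_integral_le_of_norm_le (integrable_const (‖z - z'‖ / ε^2)) ?_).trans (by simp)
        filter_upwards [hmuS] with x hx
        exact inv_diff_bound z z' x ε hε (hKe z hz x hx) (hKe z' hz' x hx)
      have hcont : ContinuousOn (fun z => ‖stieltjes μ z‖) K := by
        rw [Metric.continuousOn_iff]
        intro z hz r hr
        refine ⟨r * ε^2, by positivity, fun z' hz' hd => ?_⟩
        have h1 := hlip z' hz' z hz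
        have h2 : ‖z' - z‖ / ε^2 < r := by
          rw [div_lt_iff₀ (by positivity)]
          rw [dist_eq_norm] at hd; linarith
        calc dist ‖stieltjes μ z'‖ ‖stieltjes μ z‖ ≤ ‖stieltjes μ z' - stieltjes μ z‖ := by
              rw [Real.dist_eq]; exact abs_norm_sub_norm_le _ _
        _ < r := lt_of_le_of_lt h1 h2
      obtain ⟨z₀, hz₀K, hz₀min⟩ := hKc.exists_isMinOn hne hcont
      refine ⟨‖stieltjes μ z₀‖, norm_pos_iff.mpr ?_, fun z hz => isMinOn_iff.mp hz₀min z hz⟩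
      intro h0
      exact hKnotin z₀ hz₀K (Or.inr ⟨fun hS => hKnotin z₀ hz₀K (Or.inl hS), h0⟩)
    · exact ⟨1, one_pos, fun z hz => absurd ⟨z, hz⟩ hne⟩
  set M : ℝ := 2/ε with hM
  have hM0 : 0 < M := by positivity
  set a : ℝ := 3*δ/8 with ha
  have ha0 : 0 < a := by positivity
  set η : ℝ := ε^2*δ/4 with hη
  have hη0 : 0 < η := by positivity
  obtain ⟨T, hTK, hTcov⟩ := hKc.elim_nhds_subcover (fun w => ball w η)
    (fun w _ => ball_mem_nhds w hη0)
  set t : ℝ := min (1/M) (a/(2*M^2)) with ht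
  have ht0 : 0 < t := lt_min (by positivity) (by positivity)
  have htM : t * M ≤ 1 := by
    have : t ≤ 1/M := min_le_left _ _
    calc t * M ≤ (1/M) * M := mul_le_mul_of_nonneg_right this hM0.le
    _ = 1 := by field_simp
  set c : ℝ := t*a/2 with hc
  have hc0 : 0 < c := by positivity
  have hexp_le : ∀ n : ℕ, (t^2*M^2 - t*a) * n ≤ -(c*n) := by
    intro n
    have h1 : t ≤ a/(2*M^2) := min_le_right _ _
    have h2 : t^2*M^2 ≤ t*a/2 := by
      have := mul_le_mul_of_nonneg_left h1 ht0.le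
      calc t^2*M^2 = t * (t * M^2) := by ring
      _ ≤ t * ((a/(2*M^2)) * M^2) := by nlinarith
      _ = t*a/2 := by field_simp
    have h3 : (0:ℝ) ≤ (n:ℝ) := n.cast_nonneg
    nlinarith
  refine ⟨4*(T.card:ℝ)+1, by positivity, c, hc0, fun n => ?_⟩
  -- the bad events
  set q : ENNReal := ENNReal.ofReal (exp (-(c*n))) with hq
  set gre : ℂ → ℂ → ℝ := fun w x => ((w - x)⁻¹ - stieltjes μ w).re with hgre
  set gim : ℂ → ℂ → ℝ := fun w x => ((w - x)⁻¹ - stieltjes μ w).im with hgim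
  set A : (ℂ → ℝ) → Set Ω := fun g => {ω | a * n ≤ ∑ j ∈ Finset.range n, g (X j ω)} with hA
  have hincl : {ω | ∃ z ∈ ((∏ j ∈ Finset.range n,
        (Polynomial.X - Polynomial.C (X j ω))).derivative).roots, z ∉ Nset μ ε} ⊆
      (⋃ j ∈ Finset.range n, {ω | X j ω ∉ measSupp μ}) ∪
      ⋃ w ∈ T, ((A (gre w) ∪ A (fun x => -(gre w x))) ∪
                (A (gim w) ∪ A (fun x => -(gim w x)))) := by
    rintro ω ⟨z, hzroots, hzN⟩
    by_cases hXS : ∀ j ∈ Finset.range n, X j ω ∈ measSupp μ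
    swap
    · left
      push_neg at hXS
      obtain ⟨j, hj, hjS⟩ := hXS
      exact Set.mem_biUnion hj hjS
    right
    obtain ⟨hq0, hqz⟩ := Polynomial.mem_roots'.mp hzroots
    have hzinf : ε ≤ infDist z (measSupp μ ∪ Mset μ) := not_lt.mp hzN
    have hzdist : ∀ x ∈ measSupp μ ∪ Mset μ, ε ≤ dist z x :=
      fun x hx => hzinf.trans (infDist_le_dist_of_mem hx)
    have hzX : ∀ j ∈ Finset.range n, ε ≤ ‖z - X j ω‖ := by
      intro j hj
      have := hzdist (X j ω) (Or.inl (hXS j hj)); rwa [dist_eq_norm] at this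
    have hzXne : ∀ j ∈ Finset.range n, z ≠ X j ω := by
      intro j hj h
      have := hzX j hj; rw [h] at this; simp at this; linarith
    have hE : ∑ j ∈ Finset.range n, (z - X j ω)⁻¹ = 0 := by
      have hev := eval_deriv_prod (Finset.range n) (fun j => X j ω) z hzXne
      rw [Polynomial.IsRoot] at hqz
      rw [hqz] at hev
      have hPne : (∏ j ∈ Finset.range n, (z - X j ω)) ≠ 0 :=
        Finset.prod_ne_zero_iff.mpr fun j hj => sub_ne_zero.mpr (hzXne j hj)
      rcases mul_eq_zero.mp hev.symm with h | h
      · exact absurd h hPne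
      · exact h
    have hn : (Finset.range n).Nonempty := by
      by_contra h
      rw [Finset.not_nonempty_iff_eq_empty] at h
      rw [h] at hq0
      simp at hq0
    have hzR : ‖z‖ ≤ R := by
      by_contra h
      push_neg at h
      refine halfplane (Finset.range n) hn (fun j => X j ω) R hR0 (fun j hj => ?_) z h hE
      have := hRS (hXS j hj)
      rwa [mem_closedBall, dist_zero_right] at this
    have hzK : z ∈ K := ⟨mem_closedBall_zero_iff.mpr hzR, hzN⟩
    obtain ⟨w, hwT, hzw⟩ : ∃ w ∈ T, z ∈ ball w η := by
      have := hTcov hzK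
      simpa using this
    have hwK : w ∈ K := hTK w hwT
    have hwX : ∀ j ∈ Finset.range n, ε ≤ ‖w - X j ω‖ := by
      intro j hj
      have := hKdist w hwK (X j ω) (Or.inl (hXS j hj)); rwa [dist_eq_norm] at this
    have hEw : ‖∑ j ∈ Finset.range n, (w - X j ω)⁻¹‖ ≤ n * (δ/4) := by
      have hre : ∑ j ∈ Finset.range n, (w - X j ω)⁻¹
          = ∑ j ∈ Finset.range n, ((w - X j ω)⁻¹ - (z - X j ω)⁻¹) := by
        rw [Finset.sum_sub_distrib, hE, sub_zero]
      rw [hre]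
      calc ‖∑ j ∈ Finset.range n, ((w - X j ω)⁻¹ - (z - X j ω)⁻¹)‖
          ≤ ∑ j ∈ Finset.range n, ‖(w - X j ω)⁻¹ - (z - X j ω)⁻¹‖ := norm_sum_le _ _
      _ ≤ ∑ _j ∈ Finset.range n, (δ/4) := by
          refine Finset.sum_le_sum fun j hj => ?_
          refine (inv_diff_bound w z (X j ω) ε hε (hwX j hj) (hzX j hj)).trans ?_
          have hd : ‖w - z‖ < η := by
            rw [← dist_eq_norm, dist_comm]
            exact mem_ball.mp hzw
          rw [div_le_iff₀ (by positivity)]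
          calc ‖w - z‖ ≤ η := hd.le
          _ = δ/4 * ε^2 := by rw [hη]; ring
      _ = n * (δ/4) := by rw [Finset.sum_const, Finset.card_range, nsmul_eq_mul]
    set v : ℂ := ∑ j ∈ Finset.range n, ((w - X j ω)⁻¹ - stieltjes μ w) with hv
    have hvval : v = (∑ j ∈ Finset.range n, (w - X j ω)⁻¹) - n * stieltjes μ w := by
      rw [hv, Finset.sum_sub_distrib, Finset.sum_const, Finset.card_range, nsmul_eq_mul]
    have hvlow : 2*a*n ≤ ‖v‖ := by
      have h1 : (n:ℝ) * δ ≤ ‖(n:ℂ) * stieltjes μ w‖ := by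
        rw [norm_mul]
        have : ‖(n:ℂ)‖ = (n:ℝ) := by simp
        rw [this]
        exact mul_le_mul_of_nonneg_left (hδK w hwK) n.cast_nonneg
      have h2 : ‖(n:ℂ) * stieltjes μ w‖ - ‖∑ j ∈ Finset.range n, (w - X j ω)⁻¹‖ ≤ ‖v‖ := by
        have h := norm_sub_norm_le ((n:ℂ) * stieltjes μ w) (∑ j ∈ Finset.range n, (w - X j ω)⁻¹)
        rw [norm_sub_rev] at h
        rw [hvval]
        exact h
      have h3 : 2*a*n = (n:ℝ)*δ - n*(δ/4) := by rw [ha]; ring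
      linarith
    have hsplit : a*n ≤ |v.re| ∨ a*n ≤ |v.im| := by
      by_contra h
      push_neg at h
      have habs : ‖v‖ ≤ |v.re| + |v.im| := by
        exact Complex.norm_le_abs_re_add_abs_im v
      linarith [h.1, h.2]
    refine Set.mem_biUnion hwT ?_
    have hre2 : v.re = ∑ j ∈ Finset.range n, gre w (X j ω) := by
      rw [hv, Complex.re_sum]
    have him2 : v.im = ∑ j ∈ Finset.range n, gim w (X j ω) := by
      rw [hv, Complex.im_sum]
    rcases hsplit with h | h
    · left
      rcases le_abs.mp h with h' | h'
      · left
        show a * n ≤ ∑ j ∈ Finset.range n, gre w (X j ω)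
        rw [← hre2]; exact h'
      · right
        show a * n ≤ ∑ j ∈ Finset.range n, -(gre w (X j ω))
        rw [Finset.sum_neg_distrib, ← hre2]; exact h'
    · right
      rcases le_abs.mp h with h' | h'
      · left
        show a * n ≤ ∑ j ∈ Finset.range n, gim w (X j ω)
        rw [← him2]; exact h'
      · right
        show a * n ≤ ∑ j ∈ Finset.range n, -(gim w (X j ω))
        rw [Finset.sum_neg_distrib, ← him2]; exact h'
  -- probability bounds for each elementary event
  have hwprops : ∀ w ∈ T, (∀ x ∈ measSupp μ, ε ≤ ‖w - x‖) := by
    intro w hwT x hx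
    have := hKdist w (hTK w hwT) x (Or.inl hx); rwa [dist_eq_norm] at this
  have hbound : ∀ w ∈ T, ∀ g : ℂ → ℝ,
      (Measurable g) → (∀ x ∈ measSupp μ, |g x| ≤ M) → (∫ x, g x ∂μ = 0) →
      P (A g) ≤ q := by
    intro w hwT g hg hb hmean
    have := chernoff P μ X hmeas hdist hindep (measSupp μ) hSm hS0 g hg M hb hmean
      a t ht0 htM n
    refine this.trans (ENNReal.ofReal_le_ofReal (exp_le_exp.mpr (hexp_le n)))
  have hgprops : ∀ w ∈ T,
      Measurable (gre w) ∧ Measurable (gim w) ∧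
      (∀ x ∈ measSupp μ, |gre w x| ≤ M ∧ |gim w x| ≤ M) ∧
      (∫ x, gre w x ∂μ = 0) ∧ (∫ x, gim w x ∂μ = 0) := by
    intro w hwT
    have hmg : Measurable (fun x : ℂ => (w - x)⁻¹ - stieltjes μ w) :=
      ((measurable_const.sub measurable_id).inv).sub measurable_const
    have hInt' : Integrable (fun x => (w - x)⁻¹ - stieltjes μ w) μ :=
      (hInt w (hwprops w hwT)).sub (integrable_const _)
    have hIval : ∫ x, ((w - x)⁻¹ - stieltjes μ w) ∂μ = 0 := by
      rw [integral_sub (hInt w (hwprops w hwT)) (integrable_const _), integral_const]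
      simp [stieltjes]
    refine ⟨Complex.measurable_re.comp hmg, Complex.measurable_im.comp hmg, ?_, ?_, ?_⟩
    · intro x hx
      have hnb : ‖(w - x)⁻¹ - stieltjes μ w‖ ≤ M := by
        calc ‖(w - x)⁻¹ - stieltjes μ w‖ ≤ ‖(w - x)⁻¹‖ + ‖stieltjes μ w‖ := norm_sub_le _ _
        _ ≤ ε⁻¹ + ε⁻¹ := by
            refine add_le_add ?_ (hstb w (hwprops w hwT))
            rw [norm_inv]
            exact inv_anti₀ hε (hwprops w hwT x hx)
        _ = M := by rw [hM]; field_simp; ring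
      constructor
      · calc |gre w x| ≤ ‖(w - x)⁻¹ - stieltjes μ w‖ := by
              rw [hgre]; exact Complex.abs_re_le_norm _
        _ ≤ M := hnb
      · calc |gim w x| ≤ ‖(w - x)⁻¹ - stieltjes μ w‖ := by
              rw [hgim]; exact Complex.abs_im_le_norm _
        _ ≤ M := hnb
    · have := integral_re (μ := μ) (f := fun x => (w - x)⁻¹ - stieltjes μ w) hInt'
      simp only [RCLike.re_to_complex] at this
      rw [hgre]
      rw [this, hIval]
      simp
    · have := integral_im (μ := μ) (f := fun x => (w - x)⁻¹ - stieltjes μ w) hInt'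
      simp only [RCLike.im_to_complex] at this
      rw [hgim]
      rw [this, hIval]
      simp
  -- put everything together
  calc P {ω | ∃ z ∈ ((∏ j ∈ Finset.range n,
        (Polynomial.X - Polynomial.C (X j ω))).derivative).roots, z ∉ Nset μ ε}
      ≤ P ((⋃ j ∈ Finset.range n, {ω | X j ω ∉ measSupp μ}) ∪
        ⋃ w ∈ T, ((A (gre w) ∪ A (fun x => -(gre w x))) ∪
                  (A (gim w) ∪ A (fun x => -(gim w x))))) := measure_mono hincl
  _ ≤ P (⋃ j ∈ Finset.range n, {ω | X j ω ∉ measSupp μ}) +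
      P (⋃ w ∈ T, ((A (gre w) ∪ A (fun x => -(gre w x))) ∪
                  (A (gim w) ∪ A (fun x => -(gim w x))))) := measure_union_le _ _
  _ ≤ 0 + ∑ w ∈ T, (4*q) := by
      refine add_le_add ?_ ?_
      · refine le_trans (measure_biUnion_finset_le _ _) ?_
        refine le_of_eq (Finset.sum_eq_zero fun j _ => ?_)
        have : {ω | X j ω ∉ measSupp μ} = X j ⁻¹' (measSupp μ)ᶜ := rfl
        rw [this, ← Measure.map_apply (hmeas j) hSm.compl, hdist j, hS0]
      · refine le_trans (measure_biUnion_finset_le _ _) ?_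
        refine Finset.sum_le_sum fun w hwT => ?_
        obtain ⟨hg1, hg2, hg3, hg4, hg5⟩ := hgprops w hwT
        have e1 : P (A (gre w)) ≤ q :=
          hbound w hwT _ hg1 (fun x hx => (hg3 x hx).1) hg4
        have e2 : P (A (fun x => -(gre w x))) ≤ q := by
          refine hbound w hwT _ hg1.neg (fun x hx => ?_) ?_
          · simp only [Pi.neg_apply, abs_neg]; exact (hg3 x hx).1
          · simp only [Pi.neg_apply, integral_neg, hg4, neg_zero]
        have e3 : P (A (gim w)) ≤ q :=
          hbound w hwT _ hg2 (fun x hx => (hg3 x hx).2) hg5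
        have e4 : P (A (fun x => -(gim w x))) ≤ q := by
          refine hbound w hwT _ hg2.neg (fun x hx => ?_) ?_
          · simp only [Pi.neg_apply, abs_neg]; exact (hg3 x hx).2
          · simp only [Pi.neg_apply, integral_neg, hg5, neg_zero]
        calc P ((A (gre w) ∪ A (fun x => -(gre w x))) ∪
                  (A (gim w) ∪ A (fun x => -(gim w x))))
            ≤ P (A (gre w) ∪ A (fun x => -(gre w x))) +
              P (A (gim w) ∪ A (fun x => -(gim w x))) := measure_union_le _ _
        _ ≤ (P (A (gre w)) + P (A (fun x => -(gre w x)))) +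
            (P (A (gim w)) + P (A (fun x => -(gim w x)))) :=
            add_le_add (measure_union_le _ _) (measure_union_le _ _)
        _ ≤ q + q + (q + q) := by
            exact add_le_add (add_le_add e1 e2) (add_le_add e3 e4)
        _ = 4*q := by ring
  _ ≤ ENNReal.ofReal ((4*(T.card:ℝ)+1) * exp (-(c * n))) := by
      rw [zero_add, Finset.sum_const, nsmul_eq_mul]
      have h4q : (T.card : ENNReal) * (4 * q) = ENNReal.ofReal ((4*(T.card:ℝ)) * exp (-(c*n))) := by
        rw [hq, ← ENNReal.ofReal_natCast T.card, ← ENNReal.ofReal_ofNat 4,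
          ← ENNReal.ofReal_mul (by positivity), ← ENNReal.ofReal_mul (by positivity)]
        congr 1
        ring
      rw [h4q]
      refine ENNReal.ofReal_le_ofReal ?_
      have : (0:ℝ) ≤ exp (-(c*n)) := exp_nonneg _
      nlinarith
end
end

section
/- Let μ be a probability measure on ℂ with compact support. If m_μ(z) = 0 for some z ∉ supp(μ), where m_μ(z) := ∫_ℂ dμ(x)/(z − x) is the Cauchy–Stieltjes transform of μ, then z lies in the convex hull of supp(μ). -/
open MeasureTheory

noncomputable section

/-- Summing an `Function.extend`ed-by-zero function over the target. -/
lemma sum_extend_aux {α β M : Type*} [Fintype α] [Fintype β] [DecidableEq β]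
    [AddCommMonoid M] (e : α ↪ β) (h : α → M) :
    ∑ i, Function.extend e h 0 i = ∑ a, h a := by
  have hz : ∀ i ∈ (Finset.univ : Finset β), i ∉ Finset.univ.image e →
      Function.extend e h 0 i = 0 := by
    intro i _ hi
    have hb : ¬∃ a, e a = i := by
      rintro ⟨a, rfl⟩
      exact hi (Finset.mem_image_of_mem e (Finset.mem_univ a))
    rw [Function.extend_apply' h (0 : β → M) i hb]
    rfl
  rw [← Finset.sum_subset (Finset.subset_univ (Finset.univ.image e)) hz]
  rw [Finset.sum_image (fun a _ b _ hab => e.injective hab)]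
  exact Finset.sum_congr rfl fun a _ => e.injective.extend_apply h 0 a

/-- The convex hull of a compact subset of ℂ is compact (via Carathéodory). -/
lemma isCompact_convexHull_cx {S : Set ℂ} (hS : IsCompact S) :
    IsCompact (convexHull ℝ S) := by
  rcases S.eq_empty_or_nonempty with rfl | ⟨y₀, hy₀⟩
  · simpa [convexHull_empty] using isCompact_empty
  have himg : convexHull ℝ S =
      (fun p : (Fin 3 → ℝ) × (Fin 3 → ℂ) => ∑ i, p.1 i • p.2 i) ''
        (stdSimplex ℝ (Fin 3) ×ˢ Set.univ.pi fun _ => S) := by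
    apply Set.Subset.antisymm
    · intro x hx
      rw [convexHull_eq_union] at hx
      simp only [Set.mem_iUnion] at hx
      obtain ⟨t, hts, hai, hxt⟩ := hx
      have hcard : t.card ≤ 3 := by
        have h1 := hai.card_le_finrank_succ
        rw [Fintype.card_coe] at h1
        have h2 : Module.finrank ℝ (vectorSpan ℝ (Set.range ((↑) : t → ℂ)))
            ≤ Module.finrank ℝ ℂ := Submodule.finrank_le _
        rw [Complex.finrank_real_complex] at h2
        omega
      rw [Finset.convexHull_eq] at hxt
      obtain ⟨w, hw0, hw1, hwx⟩ := hxt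
      have hemb : Nonempty ((t : Type) ↪ Fin 3) := by
        apply Function.Embedding.nonempty_iff_card_le.2
        simpa [Fintype.card_coe] using hcard
      obtain ⟨e⟩ := hemb
      refine ⟨(Function.extend e (fun y : t => w y) 0,
               Function.extend e (fun y : t => (y : ℂ)) fun _ => y₀), ⟨⟨?_, ?_⟩, ?_⟩, ?_⟩
      · intro i
        dsimp only
        by_cases h : ∃ y, e y = i
        · obtain ⟨y, rfl⟩ := h
          rw [e.injective.extend_apply]
          exact hw0 y y.2
        · rw [Function.extend_apply' _ _ _ h]
          exact le_refl 0
      · dsimp only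
        rw [sum_extend_aux]
        rw [← hw1]
        exact Finset.sum_attach t w
      · intro i _
        dsimp only
        by_cases h : ∃ y, e y = i
        · obtain ⟨y, rfl⟩ := h
          rw [e.injective.extend_apply]
          exact hts y.2
        · rw [Function.extend_apply' _ _ _ h]
          exact hy₀
      · dsimp only
        have hpt : ∀ i, Function.extend e (fun y : t => w y) 0 i •
            Function.extend e (fun y : t => (y : ℂ)) (fun _ => y₀) i =
            Function.extend e (fun y : t => w y • (y : ℂ)) 0 i := by
          intro i
          by_cases h : ∃ y, e y = i
          · obtain ⟨y, rfl⟩ := h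
            rw [e.injective.extend_apply, e.injective.extend_apply,
              e.injective.extend_apply]
          · rw [Function.extend_apply' (fun y : t => w y) (0 : Fin 3 → ℝ) i h,
              Function.extend_apply' (fun y : t => w y • (y : ℂ)) (0 : Fin 3 → ℂ) i h,
              Pi.zero_apply, Pi.zero_apply, zero_smul]
        simp only [hpt]
        rw [sum_extend_aux]
        rw [← hwx, Finset.centerMass_eq_of_sum_1 _ _ hw1]
        exact Finset.sum_attach t fun y => w y • id y
    · rintro _ ⟨⟨wv, xv⟩, ⟨hw, hx⟩, rfl⟩
      exact (convex_convexHull ℝ S).sum_mem (fun i _ => hw.1 i) hw.2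
        (fun i _ => subset_convexHull ℝ S (hx i (Set.mem_univ i)))
  rw [himg]
  apply (((isCompact_stdSimplex _ _).prod (isCompact_univ_pi fun _ => hS)).image)
  exact continuous_finset_sum _ fun i _ =>
    ((continuous_apply i).comp continuous_fst).smul ((continuous_apply i).comp continuous_snd)

lemma measSupp_isClosed (μ : Measure ℂ) : IsClosed (measSupp μ) := by
  rw [← isOpen_compl_iff, isOpen_iff_mem_nhds]
  intro x hx
  simp only [Set.mem_compl_iff, measSupp, Set.mem_setOf_eq, not_forall, not_not] at hx
  obtain ⟨U, hU, hU0⟩ := hx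
  obtain ⟨V, hVU, hVopen, hxV⟩ := mem_nhds_iff.1 hU
  refine Filter.mem_of_superset (hVopen.mem_nhds hxV) ?_
  intro y hy hyS
  exact hyS V (hVopen.mem_nhds hy) (measure_mono_null hVU hU0)

lemma measSupp_compl_null (μ : Measure ℂ) : μ (measSupp μ)ᶜ = 0 := by
  apply measure_null_of_locally_null
  intro x hx
  simp only [Set.mem_compl_iff, measSupp, Set.mem_setOf_eq, not_forall, not_not] at hx
  obtain ⟨U, hU, hU0⟩ := hx
  exact ⟨U, mem_nhdsWithin_of_mem_nhds hU, hU0⟩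

/-- **Proposition.**  Let μ be a compactly supported probability measure on ℂ.
If m_μ(z) = 0 for some z ∉ supp(μ), then z lies in the convex hull of supp(μ). -/
theorem stieltjes_zero_mem_convexHull
    (μ : Measure ℂ) [IsProbabilityMeasure μ] (hsupp : IsCompact (measSupp μ))
    (z : ℂ) (hz : z ∉ measSupp μ) (h0 : stieltjes μ z = 0) :
    z ∈ convexHull ℝ (measSupp μ) := by
  by_contra hzK
  set S := measSupp μ with hS
  -- μ-a.e. point is in the support
  have hae : ∀ᵐ x ∂μ, x ∈ S := by
    rw [ae_iff]
    exact measSupp_compl_null μ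
  -- the support is nonempty
  have hne : S.Nonempty := by
    rcases S.eq_empty_or_nonempty with h | h
    · exfalso
      have h1 : μ Set.univ = 0 := by
        have := measSupp_compl_null μ
        rwa [← hS, h, Set.compl_empty] at this
      simp [measure_univ] at h1
    · exact h
  -- positive distance from z to the support
  have hclosed : IsClosed S := measSupp_isClosed μ
  have hε : 0 < Metric.infDist z S := (hclosed.notMem_iff_infDist_pos hne).1 hz
  set ε := Metric.infDist z S with hεdef
  have hdist : ∀ x ∈ S, ε ≤ ‖z - x‖ := by
    intro x hx
    rw [← dist_eq_norm]
    exact Metric.infDist_le_dist_of_mem hx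
  -- upper bound on distances
  obtain ⟨R, hR⟩ := hsupp.isBounded.subset_closedBall z
  set M : ℝ := max R 1 with hMdef
  have hM : 0 < M := lt_of_lt_of_le one_pos (le_max_right R 1)
  have hMb : ∀ x ∈ S, ‖z - x‖ ≤ M := by
    intro x hx
    have := hR hx
    rw [Metric.mem_closedBall] at this
    rw [← dist_eq_norm, dist_comm]
    exact le_trans this (le_max_left R 1)
  -- integrability of the Cauchy kernel
  have hmeas : AEStronglyMeasurable (fun x => (z - x)⁻¹) μ :=
    ((measurable_const.sub measurable_id).inv).aestronglyMeasurable
  have hInt : Integrable (fun x => (z - x)⁻¹) μ := by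
    refine ⟨hmeas, HasFiniteIntegral.of_bounded (C := ε⁻¹) ?_⟩
    filter_upwards [hae] with x hx
    rw [norm_inv]
    exact inv_anti₀ hε (hdist x hx)
  -- separation
  have hKcompact : IsCompact (convexHull ℝ S) := isCompact_convexHull_cx hsupp
  obtain ⟨f, u, hfu, hfz⟩ :=
    geometric_hahn_banach_closed_point (convex_convexHull ℝ S) hKcompact.isClosed hzK
  set δ : ℝ := f z - u with hδdef
  have hδ : 0 < δ := sub_pos.2 hfz
  -- the complex number representing f
  set w : ℂ := (f 1 : ℂ) + (f Complex.I : ℂ) * Complex.I with hwdef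
  have hfw : ∀ v : ℂ, ((starRingEnd ℂ) w * v).re = f v := by
    intro v
    have hv : f v = v.re * f 1 + v.im * f Complex.I := by
      conv_lhs => rw [← Complex.re_add_im v]
      rw [show ((v.re : ℂ) + (v.im : ℂ) * Complex.I)
          = v.re • (1 : ℂ) + v.im • Complex.I by
        simp [Complex.real_smul]]
      rw [map_add, _root_.map_smul, _root_.map_smul, smul_eq_mul, smul_eq_mul]
    rw [hv, hwdef]
    simp only [map_add, map_mul, Complex.conj_ofReal, Complex.conj_I, Complex.add_re,
      Complex.mul_re, Complex.ofReal_re, Complex.ofReal_im, Complex.I_re, Complex.I_im,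
      Complex.add_im, Complex.mul_im, Complex.neg_re, Complex.neg_im]
    ring
  -- key inequality for the integrand
  have hwre : ∀ v : ℂ, (w * v⁻¹).re = f v / Complex.normSq v := by
    intro v
    have h1 : (w * (starRingEnd ℂ) v).re = f v := by
      rw [← hfw v, ← Complex.conj_re (w * (starRingEnd ℂ) v), map_mul, Complex.conj_conj]
    rw [Complex.inv_def, ← mul_assoc, div_eq_mul_inv, ← h1]
    simp [Complex.mul_re, Complex.ofReal_re, Complex.ofReal_im]
  have hkey : ∀ x ∈ S, δ / M ^ 2 ≤ (w * (z - x)⁻¹).re := by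
    intro x hx
    rw [hwre (z - x)]
    have hv0 : z - x ≠ 0 := by
      intro h
      have := hdist x hx
      rw [h, norm_zero] at this
      linarith
    have hnsq_pos : 0 < Complex.normSq (z - x) := Complex.normSq_pos.2 hv0
    have hnsq_le : Complex.normSq (z - x) ≤ M ^ 2 := by
      calc Complex.normSq (z - x) = ‖z - x‖ ^ 2 := by
            rw [← Complex.sq_norm]
        _ ≤ M ^ 2 := pow_le_pow_left₀ (norm_nonneg _) (hMb x hx) 2
    have hfzx : δ ≤ f (z - x) := by
      rw [map_sub]
      have := hfu x (subset_convexHull ℝ S hx)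
      simp only [hδdef]
      linarith
    apply div_le_div₀ (le_trans (le_of_lt hδ) hfzx) hfzx hnsq_pos hnsq_le
  -- the integral of the real part is zero
  have hIntw : Integrable (fun x => w * (z - x)⁻¹) μ := hInt.const_mul w
  have hIntre : Integrable (fun x => (w * (z - x)⁻¹).re) μ := by
    have := hIntw.re
    simpa [RCLike.re_to_complex] using this
  have hzero : ∫ x, (w * (z - x)⁻¹).re ∂μ = 0 := by
    have h1 : ∫ x, w * (z - x)⁻¹ ∂μ = w * stieltjes μ z := by
      simp only [← smul_eq_mul]
      rw [integral_smul]
      rfl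
    have h2 := integral_re hIntw
    simp only [RCLike.re_to_complex] at h2
    rw [h2, h1, h0, mul_zero, Complex.zero_re]
  -- but the integral is positive: contradiction
  have hconst : Integrable (fun _ : ℂ => δ / M ^ 2) μ := integrable_const _
  have hmono : ∫ _, δ / M ^ 2 ∂μ ≤ ∫ x, (w * (z - x)⁻¹).re ∂μ := by
    apply integral_mono_ae hconst hIntre
    filter_upwards [hae] with x hx
    exact hkey x hx
  rw [integral_const, probReal_univ, one_smul] at hmono
  rw [hzero] at hmono
  have : 0 < δ / M ^ 2 := by positivity
  linarith

end
end
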